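/- The Eulerian polynomial A_n(t) = Σ_{w ∈ S_n} t^{des(w)} equals Σ_{w ∈ Ŝ_n} t^{des(w)} (1+t)^{n-1-2·des(w)}, where Ŝ_n is the set of permutations in S_n with no double descent and no final descent. -/

import Mathlib

open Finset Polynomial

open scoped Classical

noncomputable section

/-- The letter (0-based) at 0-based position `i` in the one-line notation of `w`
(junk value `0` out of range). -/
def ol (n : ℕ) (w : Equiv.Perm (Fin n)) (i : ℕ) : ℕ :=
  if h : i < n then (w ⟨i, h⟩ : ℕ) else 0

/-- The descent set of `w`, with 0-based positions: `i ∈ DesSet n w` (for `i ≤ n-2`)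
means `w(i) > w(i+1)`.  (This is the paper's descent `i+1 ∈ [n-1]`.) -/
def DesSet (n : ℕ) (w : Equiv.Perm (Fin n)) : Finset ℕ :=
  (Finset.range (n - 1)).filter fun i => ol n w (i + 1) < ol n w i

/-- The number of descents of `w`. -/
def des (n : ℕ) (w : Equiv.Perm (Fin n)) : ℕ := (DesSet n w).card

/-- `w` has no double descent: no two consecutive descent positions. -/
def NoDoubleDescent (n : ℕ) (w : Equiv.Perm (Fin n)) : Prop :=
  ∀ i ∈ DesSet n w, i + 1 ∉ DesSet n w

/-- `w` has no initial descent (no descent at the first position). -/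
def NoInitialDescent (n : ℕ) (w : Equiv.Perm (Fin n)) : Prop := 0 ∉ DesSet n w

/-- `w` has no final descent (no descent at the last position, paper's `n-1`). -/
def NoFinalDescent (n : ℕ) (w : Equiv.Perm (Fin n)) : Prop := n - 2 ∉ DesSet n w

/-- The involution `w ↦ w*`, `w*(i) = n+1-w(n+1-i)` in 1-based notation. -/
def starPerm (n : ℕ) (w : Equiv.Perm (Fin n)) : Equiv.Perm (Fin n) :=
  (Fin.revPerm.trans w).trans Fin.revPerm

/-- The letter at 1-based position `i ∈ [1,n]` of `w`, as an element of `ℕ∞`,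
with the boundary convention `w(0) = w(n+1) = ⊤`. -/
def olb (n : ℕ) (w : Equiv.Perm (Fin n)) (i : ℕ) : ℕ∞ :=
  if h : 1 ≤ i ∧ i ≤ n then ((w ⟨i - 1, by omega⟩ : ℕ) : ℕ∞) else ⊤

/-- 1-based position `i` is a peak of `w` : `w(i-1) < w(i) > w(i+1)` (boundaries `⊤`,
so positions `1` and `n` are never peaks). -/
def IsPeak (n : ℕ) (w : Equiv.Perm (Fin n)) (i : ℕ) : Prop :=
  olb n w (i - 1) < olb n w i ∧ olb n w (i + 1) < olb n w i

/-- 1-based position `i` is a valley of `w` : `w(i-1) > w(i) < w(i+1)`. -/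
def IsValley (n : ℕ) (w : Equiv.Perm (Fin n)) (i : ℕ) : Prop :=
  olb n w i < olb n w (i - 1) ∧ olb n w i < olb n w (i + 1)

/-- 1-based position `i` holds a free letter of `w` : neither a peak nor a valley. -/
def IsFree (n : ℕ) (w : Equiv.Perm (Fin n)) (i : ℕ) : Prop :=
  ¬ IsPeak n w i ∧ ¬ IsValley n w i

/-- The number of peaks of `w`. -/
def pk (n : ℕ) (w : Equiv.Perm (Fin n)) : ℕ :=
  ((Finset.Icc 1 n).filter (IsPeak n w)).card

/-- The number of inversions of `w`, i.e. its Coxeter length. -/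
def invNum (n : ℕ) (w : Equiv.Perm (Fin n)) : ℕ :=
  (Finset.univ.filter fun p : Fin n × Fin n => p.1 < p.2 ∧ w p.2 < w p.1).card

/-- The standard parabolic subgroup `W_K` of `S_n` generated by the adjacent
transpositions `(k, k+1)` (1-based letters `k ∈ K`, i.e. 0-based `k-1`, `k`). -/
def WK (n : ℕ) (K : Finset ℕ) : Subgroup (Equiv.Perm (Fin n)) :=
  Subgroup.closure { s | ∃ k ∈ K, ∃ hk : k < n,
    s = Equiv.swap (⟨k - 1, lt_of_le_of_lt (Nat.sub_le k 1) hk⟩ : Fin n) ⟨k, hk⟩ }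

/-- The set `W^K` of permutations in which, for every `k ∈ K`, the letter `k`
appears before the letter `k+1` (1-based letters; these are the minimal-length
coset representatives of `W_K`). -/
def WKreps (n : ℕ) (K : Finset ℕ) : Finset (Equiv.Perm (Fin n)) :=
  Finset.univ.filter fun w => ∀ k ∈ K, ∀ hk : k < n,
    w⁻¹ (⟨k - 1, lt_of_le_of_lt (Nat.sub_le k 1) hk⟩ : Fin n) < w⁻¹ ⟨k, hk⟩

/-- The set `W(K) = { v ∈ S_n : v⁻¹(k) − v⁻¹(k+1) ≤ 1 for all k ∈ K }`
(1-based letters `k`, `k+1`). -/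
def Wset (n : ℕ) (K : Finset ℕ) : Finset (Equiv.Perm (Fin n)) :=
  Finset.univ.filter fun v => ∀ k ∈ K, ∀ hk : k < n,
    ((v⁻¹ (⟨k - 1, lt_of_le_of_lt (Nat.sub_le k 1) hk⟩ : Fin n) : Fin n) : ℕ) ≤
      ((v⁻¹ (⟨k, hk⟩ : Fin n) : Fin n) : ℕ) + 1

/-- The orbit of `i` under the action of `W_K` on positions/letters. -/
def orbitFinset (n : ℕ) (K : Finset ℕ) (i : Fin n) : Finset (Fin n) :=
  Finset.univ.filter fun j => ∃ u ∈ WK n K, u i = j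

/-- The set of orbits of `W_K` on `[n]`. -/
def orbitsFinset (n : ℕ) (K : Finset ℕ) : Finset (Finset (Fin n)) :=
  Finset.univ.image (orbitFinset n K)

/-- The one-line notation of `w` as a list of (0-based) letters. -/
def word (n : ℕ) (w : Equiv.Perm (Fin n)) : List ℕ := List.ofFn fun i => (w i : ℕ)

/-- A single valley hop of the free letter `j` from a downslope (in `v`) to the
nearest upslope of the same height (giving `u`): `j` moves rightwards directly
across the adjacent valley `B`. -/
def hopStep (v u : List ℕ) : Prop :=
  ∃ (A B C : List ℕ) (j : ℕ), B ≠ [] ∧ (∀ x ∈ B, x < j) ∧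
    (∀ x ∈ A.getLast?, j < x) ∧ (∀ x ∈ C.head?, j < x) ∧
    v = A ++ j :: (B ++ C) ∧ u = A ++ (B ++ j :: C)

/-- Hop equivalence (valley hopping) on `S_n`: the equivalence closure of single
hops of free letters. -/
def hopEquiv (n : ℕ) (a b : Equiv.Perm (Fin n)) : Prop :=
  Relation.EqvGen (fun x y : Equiv.Perm (Fin n) => hopStep (word n x) (word n y)) a b

/-- The index (1-based) of the `W_K`-orbit containing the letter `x ∈ [1,n]`:
orbits are consecutive intervals, numbered from the left. -/
def orbIdx (K : Finset ℕ) (x : ℕ) : ℕ :=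
  1 + ((Finset.Icc 1 (x - 1)).filter fun t => t ∉ K).card

/-- The (0-based) descent set of a word `v` of length `n`. -/
def wdes (n : ℕ) (v : Fin n → ℕ) : Finset ℕ :=
  (Finset.range (n - 1)).filter fun i =>
    if h : i + 1 < n then v ⟨i + 1, h⟩ < v ⟨i, by omega⟩ else False

/-- The word `v` has content `μ(K)`: for each `i`, the number of letters of `v`
equal to `i` is the size of the `i`-th orbit of `W_K` on `[1,n]`. -/
def HasContent (n : ℕ) (K : Finset ℕ) (v : Fin n → ℕ) : Prop :=
  ∀ i : ℕ, (Finset.univ.filter fun j => v j = i).card =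
    ((Finset.Icc 1 n).filter fun x => orbIdx K x = i).card

/-- `w` is the standardization `φ(v)` of the word `v`: `w` orders positions by
letter value, breaking ties from left to right.  (This is exactly the map `φ`
of the paper: if `j` is the `k`-th smallest position with `v(j) = i`, then
`φ(v)(j) = k + μ₁ + ⋯ + μ_{i-1}`.) -/
def IsStd (n : ℕ) (v : Fin n → ℕ) (w : Equiv.Perm (Fin n)) : Prop :=
  ∀ j j' : Fin n, w j < w j' ↔ (v j < v j' ∨ (v j = v j' ∧ j < j'))


def dSet (l : List ℕ) : Finset ℕ :=
  (Finset.range (l.length - 1)).filter fun i => l.getD (i+1) 0 < l.getD i 0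

def dnum (l : List ℕ) : ℕ := (dSet l).card

def hatL (l : List ℕ) : Prop :=
  (∀ i ∈ dSet l, i + 1 ∉ dSet l) ∧ l.length - 2 ∉ dSet l

lemma mem_dSet {l : List ℕ} {i : ℕ} :
    i ∈ dSet l ↔ i + 1 < l.length ∧ l.getD (i+1) 0 < l.getD i 0 := by
  simp only [dSet, Finset.mem_filter, Finset.mem_range]
  constructor <;> rintro ⟨h1, h2⟩ <;> exact ⟨by omega, h2⟩

/-- getD of the split word -/
lemma getD_split {A B : List ℕ} {m : ℕ} (i : ℕ) :
    (A ++ m :: B).getD i 0 =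
      if i < A.length then A.getD i 0 else if i = A.length then m
      else B.getD (i - A.length - 1) 0 := by
  rcases lt_trichotomy i A.length with h | h | h
  · rw [List.getD_append _ _ _ _ h, if_pos h]
  · subst h
    rw [List.getD_append_right _ _ _ _ le_rfl]
    simp
  · rw [List.getD_append_right _ _ _ _ (le_of_lt h), if_neg (by omega), if_neg (by omega)]
    have : i - A.length = (i - A.length - 1) + 1 := by omega
    rw [this]
    rfl

lemma mem_dSet_split {A B : List ℕ} {m : ℕ}
    (hA : ∀ x ∈ A, m < x) (hB : ∀ x ∈ B, m < x) {i : ℕ} :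
    i ∈ dSet (A ++ m :: B) ↔
      i ∈ dSet A ∨ (A ≠ [] ∧ i + 1 = A.length) ∨
        (∃ j ∈ dSet B, i = A.length + 1 + j) := by
  have hlen : (A ++ m :: B).length = A.length + 1 + B.length := by
    simp [List.length_append]; omega
  rw [mem_dSet]
  constructor
  · rintro ⟨hi, hd⟩
    rw [getD_split, getD_split] at hd
    rcases lt_trichotomy (i+1) A.length with h | h | h
    · left; rw [mem_dSet]
      rw [if_pos h, if_pos (by omega)] at hd
      exact ⟨h, hd⟩
    · right; left
      exact ⟨by rintro rfl; simp at h, h⟩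
    · -- i + 1 > A.length
      rcases Nat.lt_or_ge i (A.length + 1) with h2 | h2
      · -- i = A.length : pair (m, head B) : not a descent
        have hi' : i = A.length := by omega
        rw [if_neg (by omega), if_neg (by omega), if_neg (by omega), if_pos hi'] at hd
        exfalso
        have hb : (i+1) - A.length - 1 < B.length := by omega
        have : B.getD (i + 1 - A.length - 1) 0 ∈ B := by
          rw [List.getD_eq_getElem _ _ hb]; exact List.getElem_mem _
        exact absurd hd (not_lt.2 (le_of_lt (hB _ this)))
      · right; right
        refine ⟨i - A.length - 1, ?_, by omega⟩
        rw [mem_dSet]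
        rw [if_neg (by omega), if_neg (by omega), if_neg (by omega), if_neg (by omega)] at hd
        have e1 : i + 1 - A.length - 1 = (i - A.length - 1) + 1 := by omega
        rw [e1] at hd
        exact ⟨by omega, hd⟩
  · rintro (h | ⟨hA0, h⟩ | ⟨j, hj, rfl⟩)
    · rw [mem_dSet] at h
      refine ⟨by omega, ?_⟩
      rw [getD_split, getD_split, if_pos h.1, if_pos (by omega)]
      exact h.2
    · refine ⟨by omega, ?_⟩
      rw [getD_split, getD_split, if_neg (by omega), if_pos (by omega), if_pos (by omega)]
      have : A.getD i 0 ∈ A := by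
        rw [List.getD_eq_getElem _ _ (by omega)]; exact List.getElem_mem _
      exact hA _ this
    · rw [mem_dSet] at hj
      refine ⟨by omega, ?_⟩
      rw [getD_split, getD_split, if_neg (by omega), if_neg (by omega),
        if_neg (by omega), if_neg (by omega)]
      have e1 : A.length + 1 + j + 1 - A.length - 1 = j + 1 := by omega
      have e2 : A.length + 1 + j - A.length - 1 = j := by omega
      rw [e1, e2]
      exact hj.2

lemma dSet_subset_range (l : List ℕ) : dSet l ⊆ Finset.range (l.length - 1) :=
  Finset.filter_subset _ _

lemma dnum_split {A B : List ℕ} {m : ℕ}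
    (hA : ∀ x ∈ A, m < x) (hB : ∀ x ∈ B, m < x) :
    dnum (A ++ m :: B) = dnum A + (if A = [] then 0 else 1) + dnum B := by
  have hset : dSet (A ++ m :: B) =
      (dSet A ∪ (if A = [] then ∅ else {A.length - 1})) ∪
        (dSet B).image (fun j => A.length + 1 + j) := by
    ext i
    rw [mem_dSet_split hA hB]
    simp only [Finset.mem_union, Finset.mem_image]
    constructor
    · rintro (h | ⟨h0, h⟩ | ⟨j, hj, rfl⟩)
      · exact Or.inl (Or.inl h)
      · refine Or.inl (Or.inr ?_)
        rw [if_neg h0]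
        have : A.length ≠ 0 := by simpa using h0
        simp; omega
      · exact Or.inr ⟨j, hj, rfl⟩
    · rintro ((h | h) | ⟨j, hj, rfl⟩)
      · exact Or.inl h
      · right; left
        by_cases h0 : A = []
        · rw [if_pos h0] at h; simp at h
        · rw [if_neg h0] at h
          simp at h
          have : A.length ≠ 0 := by simpa using h0
          exact ⟨h0, by omega⟩
      · exact Or.inr (Or.inr ⟨j, hj, rfl⟩)
  have hd1 : Disjoint (dSet A) (if A = [] then (∅ : Finset ℕ) else {A.length - 1}) := by
    by_cases h0 : A = []
    · simp [h0]
    · rw [if_neg h0]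
      simp only [Finset.disjoint_singleton_right]
      intro h
      have := dSet_subset_range A h
      simp at this
  have hd2 : Disjoint (dSet A ∪ (if A = [] then (∅ : Finset ℕ) else {A.length - 1}))
      ((dSet B).image (fun j => A.length + 1 + j)) := by
    rw [Finset.disjoint_left]
    intro i hi hmem
    simp only [Finset.mem_image] at hmem
    obtain ⟨j, _, rfl⟩ := hmem
    rcases Finset.mem_union.1 hi with h | h
    · have := dSet_subset_range A h; simp at this; omega
    · by_cases h0 : A = []
      · rw [if_pos h0] at h; simp at h
      · rw [if_neg h0] at h; simp at h
        have : A.length ≠ 0 := by simpa using h0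
        omega
  rw [dnum, hset, Finset.card_union_of_disjoint hd2, Finset.card_union_of_disjoint hd1,
    Finset.card_image_of_injective _ (by intro a b h; simpa using h)]
  by_cases h0 : A = [] <;> simp [h0, dnum]

lemma dSet_lt {l : List ℕ} {i : ℕ} (h : i ∈ dSet l) : i + 1 < l.length :=
  (mem_dSet.1 h).1

@[simp] lemma dSet_nil : dSet [] = ∅ := by
  simp [dSet]

@[simp] lemma dSet_singleton (a : ℕ) : dSet [a] = ∅ := by
  simp [dSet]

lemma hatL_cons_min {B : List ℕ} {m : ℕ} (hB : ∀ x ∈ B, m < x) :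
    hatL (m :: B) ↔ hatL B := by
  have key : ∀ i : ℕ, i ∈ dSet (m :: B) ↔ ∃ j ∈ dSet B, i = 1 + j := by
    intro i
    have := mem_dSet_split (A := []) (B := B) (m := m) (by simp) hB (i := i)
    simpa using this
  constructor
  · rintro ⟨h1, h2⟩
    constructor
    · intro j hj hj1
      exact h1 (1 + j) ((key _).2 ⟨j, hj, rfl⟩)
        ((key _).2 ⟨j + 1, hj1, by omega⟩)
    · intro hf
      have hlen := dSet_lt hf
      refine h2 ((key _).2 ⟨B.length - 2, hf, ?_⟩)
      simp; omega
  · rintro ⟨h1, h2⟩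
    constructor
    · intro i hi hi1
      obtain ⟨j, hj, rfl⟩ := (key _).1 hi
      obtain ⟨j', hj', he⟩ := (key _).1 hi1
      have : j' = j + 1 := by omega
      exact h1 j hj (this ▸ hj')
    · intro hf
      obtain ⟨j, hj, he⟩ := (key _).1 hf
      have hlen := dSet_lt hj
      have : j = B.length - 2 := by simp at he; omega
      exact h2 (this ▸ hj)

lemma hatL_split {A B : List ℕ} {m : ℕ} (hA0 : A ≠ [])
    (hA : ∀ x ∈ A, m < x) (hB : ∀ x ∈ B, m < x) :
    hatL (A ++ m :: B) ↔ hatL A ∧ B ≠ [] ∧ hatL B := by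
  have key := fun i => mem_dSet_split (A := A) (B := B) (m := m) hA hB (i := i)
  have hlA : 1 ≤ A.length := by
    cases A with
    | nil => exact absurd rfl hA0
    | cons a t => simp
  have hlen : (A ++ m :: B).length = A.length + 1 + B.length := by simp; omega
  constructor
  · rintro ⟨h1, h2⟩
    have hBne : B ≠ [] := by
      rintro rfl
      refine h2 ?_
      rw [key]
      right; left
      constructor
      · exact hA0
      · simp at hlen ⊢; omega
    have hlB : 1 ≤ B.length := by
      cases B with
      | nil => exact absurd rfl hBne
      | cons a t => simp
    refine ⟨⟨?_, ?_⟩, hBne, ⟨?_, ?_⟩⟩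
    · intro i hi hi1
      exact h1 i ((key i).2 (Or.inl hi)) ((key (i+1)).2 (Or.inl hi1))
    · intro hf
      have hb := dSet_lt hf
      refine h1 (A.length - 2) ((key _).2 (Or.inl hf))
        ((key _).2 (Or.inr (Or.inl ⟨hA0, by omega⟩)))
    · intro j hj hj1
      exact h1 (A.length + 1 + j) ((key _).2 (Or.inr (Or.inr ⟨j, hj, rfl⟩)))
        ((key _).2 (Or.inr (Or.inr ⟨j + 1, hj1, by omega⟩)))
    · intro hf
      have hb := dSet_lt hf
      refine h2 ?_
      rw [hlen, key]
      exact Or.inr (Or.inr ⟨B.length - 2, hf, by omega⟩)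
  · rintro ⟨⟨hA1, hA2⟩, hBne, hB1, hB2⟩
    have hlB : 1 ≤ B.length := by
      cases B with
      | nil => exact absurd rfl hBne
      | cons a t => simp
    constructor
    · intro i hi hi1
      rcases (key i).1 hi with h | ⟨_, h⟩ | ⟨j, hj, rfl⟩
      · have hb := dSet_lt h
        rcases (key (i+1)).1 hi1 with h' | ⟨_, h'⟩ | ⟨j', hj', he⟩
        · exact hA1 i h h'
        · have : i = A.length - 2 := by omega
          exact hA2 (this ▸ h)
        · have hb' := dSet_lt hj'
          omega
      · rcases (key (i+1)).1 hi1 with h' | ⟨_, h'⟩ | ⟨j', hj', he⟩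
        · have hb' := dSet_lt h'; omega
        · omega
        · omega
      · have hb := dSet_lt hj
        rcases (key _).1 hi1 with h' | ⟨_, h'⟩ | ⟨j', hj', he⟩
        · have hb' := dSet_lt h'; omega
        · omega
        · have : j' = j + 1 := by omega
          exact hB1 j hj (this ▸ hj')
    · intro hf
      rw [hlen, key] at hf
      rcases hf with h | ⟨_, h⟩ | ⟨j, hj, he⟩
      · have hb := dSet_lt h; omega
      · omega
      · have hb := dSet_lt hj
        have : j = B.length - 2 := by omega
        exact hB2 (this ▸ hj)

lemma hat_bound {l : List ℕ} (h : hatL l) (h0 : l ≠ []) :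
    2 * dnum l + 1 ≤ l.length := by
  have hl1 : 1 ≤ l.length := List.length_pos_iff.2 h0
  by_cases h3 : l.length ≤ 2
  · have he : dSet l = ∅ := by
      refine Finset.eq_empty_of_forall_notMem fun x hx => ?_
      have hb := dSet_lt hx
      have : x = l.length - 2 := by omega
      exact h.2 (this ▸ hx)
    simp [dnum, he]; omega
  · have key : ∀ x ∈ dSet l, x ≤ l.length - 3 := by
      intro x hx
      have hb := dSet_lt hx
      have : x ≠ l.length - 2 := by rintro rfl; exact h.2 hx
      omega
    have hcard := Finset.card_le_card_of_injOn (f := fun x => x / 2)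
      (t := Finset.range ((l.length - 3) / 2 + 1))
      (fun x hx => by
        have := key x hx
        simp only [Finset.mem_coe, Finset.mem_range]
        omega)
      (fun x hx y hy hxy => by
        have h1 : x + 1 ≠ y := fun e => h.1 x hx (e ▸ hy)
        have h2 : y + 1 ≠ x := fun e => h.1 y hy (e ▸ hx)
        simp only at hxy
        omega)
    rw [Finset.card_range] at hcard
    have : dnum l = (dSet l).card := rfl
    omega

def permsOf (s : Finset ℕ) : Finset (List ℕ) :=
  (s.sort (· ≤ ·)).permutations.toFinset

lemma mem_permsOf {s : Finset ℕ} {l : List ℕ} :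
    l ∈ permsOf s ↔ l.Nodup ∧ l.toFinset = s := by
  rw [permsOf, List.mem_toFinset, List.mem_permutations]
  constructor
  · intro h
    refine ⟨(Finset.sort_nodup (α := ℕ) s (· ≤ ·)).perm h.symm, ?_⟩
    ext a
    rw [List.mem_toFinset, h.mem_iff, ← List.mem_toFinset, Finset.sort_toFinset]
  · rintro ⟨h1, h2⟩
    rw [List.perm_ext_iff_of_nodup h1 (Finset.sort_nodup _ _)]
    intro a
    rw [← List.mem_toFinset, h2, ← Finset.mem_sort (α := ℕ) (· ≤ ·)]

lemma permsOf_empty : permsOf ∅ = {[]} := by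
  ext l
  rw [mem_permsOf]
  simp [List.toFinset_eq_empty_iff]
  rintro rfl; simp

lemma permsOf_singleton (a : ℕ) : permsOf {a} = {[a]} := by
  ext l
  rw [mem_permsOf]
  simp only [Finset.mem_singleton]
  constructor
  · rintro ⟨h1, h2⟩
    have hlen : l.length = 1 := by
      rw [← List.toFinset_card_of_nodup h1, h2, Finset.card_singleton]
    obtain ⟨x, rfl⟩ := List.length_eq_one_iff.1 hlen
    simp at h2
    subst h2; rfl
  · rintro rfl
    simp

lemma ne_nil_of_mem_permsOf {s : Finset ℕ} {l : List ℕ} (hs : s.Nonempty)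
    (h : l ∈ permsOf s) : l ≠ [] := by
  rintro rfl
  rw [mem_permsOf] at h
  simp at h
  exact hs.ne_empty h.symm

lemma length_of_mem_permsOf {s : Finset ℕ} {l : List ℕ} (h : l ∈ permsOf s) :
    l.length = s.card := by
  rw [mem_permsOf] at h
  rw [← h.2, List.toFinset_card_of_nodup h.1]

lemma takeWhile_ne_append {A B : List ℕ} {m : ℕ} (hmA : m ∉ A) :
    (A ++ m :: B).takeWhile (· ≠ m) = A := by
  induction A with
  | nil => simp
  | cons a t ih =>
    have ha : a ≠ m := fun e => hmA (e ▸ List.mem_cons_self (a := a) (l := t))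
    simp only [List.cons_append, List.takeWhile_cons]
    rw [if_pos (by simpa using ha)]
    rw [ih (fun h => hmA (List.mem_cons_of_mem a h))]

lemma dropWhile_ne_append {A B : List ℕ} {m : ℕ} (hmA : m ∉ A) :
    (A ++ m :: B).dropWhile (· ≠ m) = m :: B := by
  induction A with
  | nil => simp
  | cons a t ih =>
    have ha : a ≠ m := fun e => hmA (e ▸ List.mem_cons_self (a := a) (l := t))
    simp only [List.cons_append, List.dropWhile_cons]
    rw [if_pos (by simpa using ha)]
    exact ih (fun h => hmA (List.mem_cons_of_mem a h))

lemma dropWhile_of_mem {l : List ℕ} {m : ℕ} (h : m ∈ l) :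
    l.dropWhile (· ≠ m) = m :: (l.dropWhile (· ≠ m)).tail := by
  induction l with
  | nil => simp at h
  | cons a t ih =>
    by_cases ha : a = m
    · subst ha
      simp [List.dropWhile_cons]
    · rw [List.dropWhile_cons, if_pos (by simpa using ha)]
      refine ih ?_
      rcases List.mem_cons.1 h with e | h'
      · exact absurd e.symm ha
      · exact h'

lemma sum_split {M : Type*} [AddCommMonoid M] {s : Finset ℕ} (hs : s.Nonempty)
    (f : List ℕ → M) :
    ∑ l ∈ permsOf s, f l =
      ∑ u ∈ (s.erase (s.min' hs)).powerset, ∑ A ∈ permsOf u,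
        ∑ B ∈ permsOf ((s.erase (s.min' hs)) \ u), f (A ++ (s.min' hs) :: B) := by
  set m := s.min' hs with hm
  set s' := s.erase m with hs'
  have hms : m ∈ s := s.min'_mem hs
  have hins : insert m s' = s := Finset.insert_erase hms
  have hmns' : m ∉ s' := Finset.notMem_erase m s
  have h1 : ∀ u, (∑ A ∈ permsOf u, ∑ B ∈ permsOf (s' \ u), f (A ++ m :: B)) =
      ∑ p ∈ permsOf u ×ˢ permsOf (s' \ u), f (p.1 ++ m :: p.2) :=
    fun u => (Finset.sum_product' _ _ _).symm
  simp_rw [h1]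
  rw [Finset.sum_sigma' s'.powerset (fun u => permsOf u ×ˢ permsOf (s' \ u))
    (fun _ p => f (p.1 ++ m :: p.2))]
  refine Finset.sum_nbij' (fun l => (⟨(l.takeWhile (· ≠ m)).toFinset,
      (l.takeWhile (· ≠ m), (l.dropWhile (· ≠ m)).tail)⟩ :
      (_ : Finset ℕ) × (List ℕ × List ℕ)))
    (fun x => x.2.1 ++ m :: x.2.2) ?_ ?_ ?_ ?_ ?_
  · -- into the sigma set
    intro l hl
    rw [mem_permsOf] at hl
    obtain ⟨hnd, hfin⟩ := hl
    have hml : m ∈ l := by rw [← List.mem_toFinset, hfin]; exact hms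
    have hdec : l = l.takeWhile (· ≠ m) ++ m :: (l.dropWhile (· ≠ m)).tail := by
      conv_lhs => rw [← List.takeWhile_append_dropWhile (p := (· ≠ m)) (l := l)]
      rw [← dropWhile_of_mem hml]
    set A := l.takeWhile (· ≠ m) with hA
    set B := (l.dropWhile (· ≠ m)).tail with hB
    have hndA : A.Nodup := (List.takeWhile_sublist _).nodup hnd
    have hnd' := hnd
    rw [hdec, List.nodup_append] at hnd'
    obtain ⟨_, hndmB, hdisj⟩ := hnd'
    have hmB : m ∉ B := (List.nodup_cons.1 hndmB).1
    have hndB : B.Nodup := (List.nodup_cons.1 hndmB).2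
    have hmemA : ∀ x ∈ A, x ∈ s' := by
      intro x hx
      have hxl : x ∈ l := (List.takeWhile_sublist _).mem hx
      have hxm : x ≠ m := by simpa using List.mem_takeWhile_imp hx
      rw [hs', Finset.mem_erase]
      exact ⟨hxm, by rw [← hfin]; exact List.mem_toFinset.2 hxl⟩
    rw [Finset.mem_sigma]
    constructor
    · rw [Finset.mem_powerset]
      intro x hx
      exact hmemA x (List.mem_toFinset.1 hx)
    · rw [Finset.mem_product]
      refine ⟨mem_permsOf.2 ⟨hndA, rfl⟩, mem_permsOf.2 ⟨hndB, ?_⟩⟩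
      ext x
      rw [List.mem_toFinset, Finset.mem_sdiff, hs', Finset.mem_erase, ← hfin,
        List.mem_toFinset, List.mem_toFinset]
      constructor
      · intro hx
        have hxm : x ≠ m := fun e => hmB (e ▸ hx)
        have hxA : x ∉ A := fun hA' => hdisj x hA' x (List.mem_cons_of_mem m hx) rfl
        exact ⟨⟨hxm, by rw [hdec]; exact List.mem_append_right _ (List.mem_cons_of_mem m hx)⟩, hxA⟩
      · rintro ⟨⟨hxm, hxl⟩, hxA⟩
        rw [hdec] at hxl
        rcases List.mem_append.1 hxl with h | h
        · exact absurd h hxA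
        · rcases List.mem_cons.1 h with e | h
          · exact absurd e hxm
          · exact h
  · -- into permsOf s
    rintro ⟨u, A, B⟩ hx
    rw [Finset.mem_sigma, Finset.mem_powerset, Finset.mem_product] at hx
    obtain ⟨hu, hA, hB⟩ := hx
    rw [mem_permsOf] at hA hB
    obtain ⟨hndA, hfA⟩ := hA
    obtain ⟨hndB, hfB⟩ := hB
    have hmemA : ∀ x ∈ A, x ∈ s' := fun x hx => hu (hfA ▸ List.mem_toFinset.2 hx)
    have hmemB : ∀ x ∈ B, x ∈ s' \ u := fun x hx => hfB ▸ List.mem_toFinset.2 hx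
    have hmA : m ∉ A := fun h => hmns' (hmemA m h)
    have hmB : m ∉ B := fun h => hmns' (Finset.mem_sdiff.1 (hmemB m h)).1
    rw [mem_permsOf]
    constructor
    · rw [List.nodup_append]
      refine ⟨hndA, List.nodup_cons.2 ⟨hmB, hndB⟩, ?_⟩
      intro x hxA y hxmB hxy
      subst hxy
      rcases List.mem_cons.1 hxmB with e | hxB
      · exact hmA (e ▸ hxA)
      · have h1 := hfA ▸ List.mem_toFinset.2 hxA
        have h2 := hfB ▸ List.mem_toFinset.2 hxB
        exact (Finset.mem_sdiff.1 h2).2 h1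
    · rw [← hins]
      ext x
      simp only [List.toFinset_append, List.toFinset_cons, Finset.mem_union,
        Finset.mem_insert, Finset.mem_sdiff, List.mem_toFinset, hfA, hfB,
        Finset.mem_sdiff]
      constructor
      · rintro (h | h | h)
        · exact Or.inr (hu h)
        · exact Or.inl h
        · exact Or.inr h.1
      · rintro (h | h)
        · exact Or.inr (Or.inl h)
        · by_cases hxu : x ∈ u
          · exact Or.inl hxu
          · exact Or.inr (Or.inr ⟨h, hxu⟩)
  · -- left inverse
    intro l hl
    rw [mem_permsOf] at hl
    have hml : m ∈ l := by rw [← List.mem_toFinset, hl.2]; exact hms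
    simp only
    conv_rhs => rw [← List.takeWhile_append_dropWhile (p := (· ≠ m)) (l := l),
      dropWhile_of_mem hml]
  · -- right inverse
    rintro ⟨u, A, B⟩ hx
    rw [Finset.mem_sigma, Finset.mem_powerset, Finset.mem_product] at hx
    obtain ⟨hu, hA, hB⟩ := hx
    rw [mem_permsOf] at hA hB
    have hmA : m ∉ A := fun h => hmns' (hu (hA.2 ▸ List.mem_toFinset.2 h))
    have e1 : (A ++ m :: B).takeWhile (· ≠ m) = A := takeWhile_ne_append hmA
    have e2 : (A ++ m :: B).dropWhile (· ≠ m) = m :: B := dropWhile_ne_append hmA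
    simp only [e1, e2, List.tail_cons, hA.2]
  · intro l hl
    rw [mem_permsOf] at hl
    have hml : m ∈ l := by rw [← List.mem_toFinset, hl.2]; exact hms
    simp only
    congr 1
    conv_lhs => rw [← List.takeWhile_append_dropWhile (p := (· ≠ m)) (l := l),
      dropWhile_of_mem hml]

@[simp] lemma dnum_nil : dnum [] = 0 := by simp [dnum]

lemma hatL_nil : hatL [] := ⟨by simp, by simp⟩

def tF (l : List ℕ) : Polynomial ℕ := X ^ dnum l

def tG (l : List ℕ) : Polynomial ℕ :=
  if hatL l then X ^ dnum l * (1 + X) ^ (l.length - 1 - 2 * dnum l) else 0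

lemma FG (s : Finset ℕ) : ∑ l ∈ permsOf s, tF l = ∑ l ∈ permsOf s, tG l := by
  induction s using Finset.strongInduction with
  | _ s ih =>
  rcases Nat.lt_or_ge s.card 2 with hcard | hcard
  · -- base cases: card 0 or 1
    interval_cases h : s.card
    · rw [Finset.card_eq_zero.1 h, permsOf_empty]
      simp [tF, tG, hatL_nil]
    · obtain ⟨a, rfl⟩ := Finset.card_eq_one.1 h
      rw [permsOf_singleton]
      have : hatL [a] := ⟨by simp, by simp⟩
      simp [tF, tG, this, dnum]
  · have hs : s.Nonempty := Finset.card_pos.1 (by omega)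
    set m := s.min' hs with hm
    set s' := s.erase m with hs'
    have hms : m ∈ s := s.min'_mem hs
    have hcard' : s'.card = s.card - 1 := Finset.card_erase_of_mem hms
    have hs'ne : s'.Nonempty := Finset.card_pos.1 (by omega)
    have hs'sub : s' ⊂ s := Finset.erase_ssubset hms
    have hlt : ∀ x ∈ s', m < x := fun x hx =>
      lt_of_le_of_ne (s.min'_le x (Finset.mem_of_mem_erase hx))
        (Ne.symm (Finset.mem_erase.1 hx).1)
    -- elements of perms of subsets of s' are > m
    have hgt : ∀ u : Finset ℕ, u ⊆ s' → ∀ A ∈ permsOf u, ∀ x ∈ A, m < x := by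
      intro u hu A hA x hx
      rw [mem_permsOf] at hA
      exact hlt x (hu (hA.2 ▸ List.mem_toFinset.2 hx))
    rw [sum_split hs tF, sum_split hs tG, ← hm, ← hs']
    -- split the powerset sum into ∅, s', and the rest
    have hsplit3 : ∀ g : Finset ℕ → Polynomial ℕ,
        ∑ u ∈ s'.powerset, g u =
          g ∅ + g s' + ∑ u ∈ (s'.powerset.erase ∅).erase s', g u := by
      intro g
      have h1 : s' ∈ s'.powerset.erase ∅ :=
        Finset.mem_erase.2 ⟨hs'ne.ne_empty, Finset.mem_powerset_self s'⟩
      rw [← Finset.add_sum_erase _ g (Finset.empty_mem_powerset s'),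
        ← Finset.add_sum_erase _ g h1]
      ring
    rw [hsplit3, hsplit3]
    -- evaluate the ∅ part
    have hF0 : (∑ A ∈ permsOf ∅, ∑ B ∈ permsOf (s' \ ∅), tF (A ++ m :: B)) =
        ∑ B ∈ permsOf s', tF B := by
      rw [permsOf_empty, Finset.sum_singleton, Finset.sdiff_empty]
      refine Finset.sum_congr rfl fun B hB => ?_
      have hB' := hgt s' le_rfl B hB
      have := dnum_split (A := []) (B := B) (m := m) (by simp) hB'
      simp only [List.nil_append] at this ⊢
      simp [tF, this]
    have hG0 : (∑ A ∈ permsOf ∅, ∑ B ∈ permsOf (s' \ ∅), tG (A ++ m :: B)) =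
        (1 + X) * ∑ B ∈ permsOf s', tG B := by
      rw [permsOf_empty, Finset.sum_singleton, Finset.sdiff_empty, Finset.mul_sum]
      refine Finset.sum_congr rfl fun B hB => ?_
      have hB' := hgt s' le_rfl B hB
      have hBne : B ≠ [] := ne_nil_of_mem_permsOf hs'ne hB
      have hd : dnum (m :: B) = dnum B := by
        have := dnum_split (A := []) (B := B) (m := m) (by simp) hB'
        simpa using this
      have hh : hatL (m :: B) ↔ hatL B := hatL_cons_min hB'
      have hBnd : B.Nodup := (mem_permsOf.1 hB).1
      simp only [List.nil_append, tG, hd, hh, List.length_cons]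
      by_cases hhb : hatL B
      · rw [if_pos hhb, if_pos hhb]
        have hbound := hat_bound hhb hBne
        have he : B.length + 1 - 1 - 2 * dnum B = (B.length - 1 - 2 * dnum B) + 1 := by
          omega
        rw [he, pow_succ]
        ring
      · rw [if_neg hhb, if_neg hhb, mul_zero]
    -- evaluate the s' part
    have hFs' : (∑ A ∈ permsOf s', ∑ B ∈ permsOf (s' \ s'), tF (A ++ m :: B)) =
        X * ∑ A ∈ permsOf s', tF A := by
      rw [Finset.sdiff_self, permsOf_empty, Finset.mul_sum]
      refine Finset.sum_congr rfl fun A hA => ?_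
      rw [Finset.sum_singleton]
      have hA' := hgt s' le_rfl A hA
      have hAne : A ≠ [] := ne_nil_of_mem_permsOf hs'ne hA
      have hd := dnum_split (A := A) (B := []) (m := m) hA' (by simp)
      rw [if_neg hAne] at hd
      simp only [tF, hd]
      rw [pow_add, pow_add]
      simp [mul_comm]
    have hGs' : (∑ A ∈ permsOf s', ∑ B ∈ permsOf (s' \ s'), tG (A ++ m :: B)) = 0 := by
      rw [Finset.sdiff_self, permsOf_empty]
      refine Finset.sum_eq_zero fun A hA => ?_
      rw [Finset.sum_singleton]
      have hA' := hgt s' le_rfl A hA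
      have hAne : A ≠ [] := ne_nil_of_mem_permsOf hs'ne hA
      have hh := hatL_split (A := A) (B := []) (m := m) hAne hA' (by simp)
      rw [tG, if_neg]
      rw [hh]
      rintro ⟨-, h, -⟩
      exact h rfl
    -- evaluate the rest
    have hrest : ∀ u ∈ (s'.powerset.erase ∅).erase s',
        (∑ A ∈ permsOf u, ∑ B ∈ permsOf (s' \ u), tG (A ++ m :: B)) =
          X * (∑ A ∈ permsOf u, tF A) * (∑ B ∈ permsOf (s' \ u), tF B) ∧
        (∑ A ∈ permsOf u, ∑ B ∈ permsOf (s' \ u), tF (A ++ m :: B)) =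
          X * (∑ A ∈ permsOf u, tF A) * (∑ B ∈ permsOf (s' \ u), tF B) := by
      intro u hu
      rw [Finset.mem_erase, Finset.mem_erase, Finset.mem_powerset] at hu
      obtain ⟨hune', ⟨hune, husub⟩⟩ := hu
      have hvsub : s' \ u ⊆ s' := Finset.sdiff_subset
      have hvne : (s' \ u).Nonempty := by
        rw [Finset.sdiff_nonempty]
        intro h
        exact hune' (Finset.Subset.antisymm husub h)
      have huX : u ⊂ s := lt_of_le_of_lt husub hs'sub
      have hvX : s' \ u ⊂ s := lt_of_le_of_lt hvsub hs'sub
      have huNe : u.Nonempty := Finset.nonempty_iff_ne_empty.2 hune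
      constructor
      · have e1 : (∑ A ∈ permsOf u, ∑ B ∈ permsOf (s' \ u), tG (A ++ m :: B)) =
            ∑ A ∈ permsOf u, ∑ B ∈ permsOf (s' \ u), X * tG A * tG B := by
          refine Finset.sum_congr rfl fun A hA => Finset.sum_congr rfl fun B hB => ?_
          have hA' := hgt u husub A hA
          have hB' := hgt _ hvsub B hB
          have hAne : A ≠ [] := ne_nil_of_mem_permsOf huNe hA
          have hBne : B ≠ [] := ne_nil_of_mem_permsOf hvne hB
          have hd := dnum_split (A := A) (B := B) (m := m) hA' hB'
          rw [if_neg hAne] at hd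
          have hh := hatL_split (A := A) (B := B) (m := m) hAne hA' hB'
          have hlen : (A ++ m :: B).length = A.length + 1 + B.length := by
            simp; omega
          simp only [tG]
          by_cases hab : hatL A ∧ hatL B
          · rw [if_pos (hh.2 ⟨hab.1, hBne, hab.2⟩), if_pos hab.1, if_pos hab.2]
            have hbA := hat_bound hab.1 hAne
            have hbB := hat_bound hab.2 hBne
            rw [hlen, hd]
            have he : A.length + 1 + B.length - 1 - 2 * (dnum A + 1 + dnum B) =
                (A.length - 1 - 2 * dnum A) + (B.length - 1 - 2 * dnum B) := by
              omega
            rw [he, pow_add, pow_add]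
            ring
          · rw [if_neg (fun h => hab ⟨(hh.1 h).1, (hh.1 h).2.2⟩)]
            rcases (not_and_or.1 hab) with h | h
            · rw [if_neg h]; ring
            · rw [if_neg h]; ring
        rw [e1, ih u huX, ih _ hvX]
        simp only [Finset.mul_sum, Finset.sum_mul, mul_assoc]
        rw [Finset.sum_comm]
      · have e2 : (∑ A ∈ permsOf u, ∑ B ∈ permsOf (s' \ u), tF (A ++ m :: B)) =
            ∑ A ∈ permsOf u, ∑ B ∈ permsOf (s' \ u), X * tF A * tF B := by
          refine Finset.sum_congr rfl fun A hA => Finset.sum_congr rfl fun B hB => ?_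
          have hA' := hgt u husub A hA
          have hB' := hgt _ hvsub B hB
          have hAne : A ≠ [] := ne_nil_of_mem_permsOf huNe hA
          have hd := dnum_split (A := A) (B := B) (m := m) hA' hB'
          rw [if_neg hAne] at hd
          simp only [tF, hd]
          rw [pow_add, pow_add]
          ring
        rw [e2]
        simp only [Finset.mul_sum, Finset.sum_mul, mul_assoc]
        rw [Finset.sum_comm]
    rw [hF0, hG0, hFs', hGs']
    have hrw1 : ∑ u ∈ (s'.powerset.erase ∅).erase s',
        (∑ A ∈ permsOf u, ∑ B ∈ permsOf (s' \ u), tF (A ++ m :: B)) =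
        ∑ u ∈ (s'.powerset.erase ∅).erase s',
        (∑ A ∈ permsOf u, ∑ B ∈ permsOf (s' \ u), tG (A ++ m :: B)) := by
      refine Finset.sum_congr rfl fun u hu => ?_
      rw [(hrest u hu).1, (hrest u hu).2]
    rw [hrw1, ih s' hs'sub]
    ring


lemma word_length (n : ℕ) (w : Equiv.Perm (Fin n)) : (word n w).length = n := by
  simp [word]

lemma word_getD (n : ℕ) (w : Equiv.Perm (Fin n)) {i : ℕ} (h : i < n) :
    (word n w).getD i 0 = (w ⟨i, h⟩ : ℕ) := by
  rw [List.getD_eq_getElem _ _ (by rw [word_length]; exact h)]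
  simp [word]

lemma dSet_word (n : ℕ) (w : Equiv.Perm (Fin n)) : dSet (word n w) = DesSet n w := by
  unfold dSet DesSet
  rw [word_length]
  refine Finset.filter_congr fun i hi => ?_
  rw [Finset.mem_range] at hi
  rw [word_getD n w (by omega), word_getD n w (by omega), ol, ol,
    dif_pos (by omega : i < n), dif_pos (by omega : i + 1 < n)]

lemma des_word (n : ℕ) (w : Equiv.Perm (Fin n)) : dnum (word n w) = des n w := by
  rw [dnum, dSet_word]; rfl

lemma hat_word (n : ℕ) (w : Equiv.Perm (Fin n)) :
    hatL (word n w) ↔ (NoDoubleDescent n w ∧ NoFinalDescent n w) := by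
  unfold hatL NoDoubleDescent NoFinalDescent
  rw [dSet_word, word_length]

lemma word_mem_permsOf (n : ℕ) (w : Equiv.Perm (Fin n)) :
    word n w ∈ permsOf (Finset.range n) := by
  rw [mem_permsOf]
  constructor
  · rw [word, List.nodup_ofFn]
    intro i j h
    exact w.injective (Fin.val_injective h)
  · ext x
    simp only [word, List.mem_toFinset, List.mem_ofFn, Finset.mem_range]
    constructor
    · rintro ⟨i, rfl⟩; exact (w i).isLt
    · intro hx; exact ⟨w.symm ⟨x, hx⟩, by simp⟩

lemma word_injective (n : ℕ) : Function.Injective (word n) := by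
  intro w w' h
  ext i
  have := congrArg (fun l => l.getD i.val 0) h
  rw [word_getD n w i.isLt, word_getD n w' i.isLt] at this
  simp only [Fin.eta] at this
  exact this

lemma exists_word (n : ℕ) {l : List ℕ} (hl : l ∈ permsOf (Finset.range n)) :
    ∃ w : Equiv.Perm (Fin n), word n w = l := by
  rw [mem_permsOf] at hl
  obtain ⟨hnd, hfin⟩ := hl
  have hlen : l.length = n := by
    rw [← List.toFinset_card_of_nodup hnd, hfin, Finset.card_range]
  have hmem : ∀ i : Fin n, l.get ⟨i.val, by omega⟩ < n := by
    intro i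
    have : l.get ⟨i.val, by omega⟩ ∈ l := List.get_mem l _
    rw [← List.mem_toFinset, hfin, Finset.mem_range] at this
    exact this
  set f : Fin n → Fin n := fun i => ⟨l.get ⟨i.val, by omega⟩, hmem i⟩ with hf
  have hinj : Function.Injective f := by
    intro i j h
    have h2 : l.get ⟨i.val, by omega⟩ = l.get ⟨j.val, by omega⟩ := congrArg Fin.val h
    have h3 := List.nodup_iff_injective_get.1 hnd h2
    exact Fin.ext (congrArg (@Fin.val l.length) h3)
  have hbij : Function.Bijective f := (Finite.injective_iff_bijective).1 hinj
  refine ⟨Equiv.ofBijective f hbij, ?_⟩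
  apply List.ext_get (by rw [word_length, hlen])
  intro k h1 h2
  rw [word_length] at h1
  simp only [word, List.get_ofFn, Equiv.ofBijective_apply, hf]
  rfl

def toPermL (n : ℕ) (l : List ℕ) : Equiv.Perm (Fin n) :=
  if h : ∃ w : Equiv.Perm (Fin n), word n w = l then h.choose else 1

lemma sum_word (n : ℕ) (f : List ℕ → Polynomial ℕ) :
    ∑ w : Equiv.Perm (Fin n), f (word n w) = ∑ l ∈ permsOf (Finset.range n), f l := by
  refine Finset.sum_nbij' (word n) (toPermL n)
    (fun w _ => word_mem_permsOf n w) (fun l hl => Finset.mem_univ _) ?_ ?_ ?_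
  · intro w _
    have hex : ∃ w' : Equiv.Perm (Fin n), word n w' = word n w := ⟨w, rfl⟩
    rw [toPermL, dif_pos hex]
    exact word_injective n hex.choose_spec
  · intro l hl
    have hex := exists_word n hl
    rw [toPermL, dif_pos hex]
    exact hex.choose_spec
  · intro w _; rfl

theorem eulerian_gamma_hat (n : ℕ) :
    ∑ w : Equiv.Perm (Fin n), (X : Polynomial ℕ) ^ des n w =
      ∑ w ∈ Finset.univ.filter
          (fun w : Equiv.Perm (Fin n) => NoDoubleDescent n w ∧ NoFinalDescent n w),
        (X : Polynomial ℕ) ^ des n w * (1 + X) ^ (n - 1 - 2 * des n w) := by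
  calc ∑ w : Equiv.Perm (Fin n), (X : Polynomial ℕ) ^ des n w
      = ∑ w : Equiv.Perm (Fin n), tF (word n w) := by
        refine Finset.sum_congr rfl fun w _ => ?_
        rw [tF, des_word]
    _ = ∑ l ∈ permsOf (Finset.range n), tF l := sum_word n tF
    _ = ∑ l ∈ permsOf (Finset.range n), tG l := FG _
    _ = ∑ w : Equiv.Perm (Fin n), tG (word n w) := (sum_word n tG).symm
    _ = ∑ w : Equiv.Perm (Fin n),
          (if NoDoubleDescent n w ∧ NoFinalDescent n w then
            (X : Polynomial ℕ) ^ des n w * (1 + X) ^ (n - 1 - 2 * des n w) else 0) := by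
        refine Finset.sum_congr rfl fun w _ => ?_
        rw [tG, word_length, des_word]
        by_cases h : NoDoubleDescent n w ∧ NoFinalDescent n w
        · rw [if_pos ((hat_word n w).2 h), if_pos h]
        · rw [if_neg (fun h' => h ((hat_word n w).1 h')), if_neg h]
    _ = _ := (Finset.sum_filter _ _).symm
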